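/- Let O be a discrete valuation ring with uniformizer π and fraction field k. Let ξ ∈ M_n(O) be an upper triangular matrix in Hermite normal form with diagonal entries π^{m_1}, …, π^{m_n} (so the off-diagonal entry a_{ij}, for i < j, lies in a fixed set of residues modulo π^{m_j}O, with 0 representing the zero class). Then ξ·D·ξ^{-1} ∈ M_n(O) for every diagonal matrix D with entries in O if and only if ξ is diagonal. -/

import Mathlib

noncomputable section

/-- A matrix `ξ ∈ M_n(O)` in Hermite normal form (upper triangular, diagonal entries
`ϖ^{m_i}`, and for `i < j` the entry `ξ_{ij}` is a chosen residue representative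
mod `ϖ^{m_j}`, with the zero class represented by `0`) satisfies
`ξ D ξ⁻¹ ∈ M_n(O)` for every diagonal `D` with entries in `O` iff `ξ` is diagonal. -/
theorem stmt3 {n : ℕ} {O : Type*} [CommRing O] [IsDomain O] [IsDiscreteValuationRing O]
    {k : Type*} [Field k] [Algebra O k] [IsFractionRing O k]
    (ϖ : O) (hϖ : Irreducible ϖ)
    (ξ : Matrix (Fin n) (Fin n) O) (m : Fin n → ℕ)
    (hdiag : ∀ i, ξ i i = ϖ ^ m i)
    (hupper : ∀ i j : Fin n, j < i → ξ i j = 0)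
    (hHNF : ∀ i j : Fin n, i < j → ϖ ^ m j ∣ ξ i j → ξ i j = 0) :
    (∀ D : Fin n → O, ∀ i j : Fin n,
        ((ξ.map (algebraMap O k)) *
          Matrix.diagonal (fun i => algebraMap O k (D i)) *
          (ξ.map (algebraMap O k))⁻¹) i j ∈ Set.range (algebraMap O k)) ↔
      ∀ i j : Fin n, i ≠ j → ξ i j = 0 := by
  set f := algebraMap O k with hf
  have hinj : Function.Injective f := IsFractionRing.injective O k
  have hϖ0 : ϖ ≠ 0 := hϖ.ne_zero
  set ξ' := ξ.map f with hξ'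
  have hdiag' : ∀ i, ξ' i i = f (ϖ ^ m i) := fun i => by
    simp [hξ', Matrix.map_apply, hdiag i]
  have hfpow : ∀ i, f (ϖ ^ m i) ≠ 0 := fun i =>
    (map_ne_zero_iff f hinj).mpr (pow_ne_zero _ hϖ0)
  have hdiagne : ∀ i, ξ' i i ≠ 0 := fun i => by rw [hdiag' i]; exact hfpow i
  constructor
  · -- forward direction
    intro h i j hij
    rcases hij.lt_or_gt with hlt | hlt
    · -- i < j
      apply hHNF i j hlt
      -- set up triangularity and invertibility
      have hBT : ξ'.BlockTriangular id := fun a b hab => by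
        simp only [hξ', Matrix.map_apply, hupper a b hab, map_zero]
      have hdet : ξ'.det ≠ 0 := by
        rw [Matrix.det_of_upperTriangular hBT]
        exact Finset.prod_ne_zero_iff.mpr fun l _ => hdiagne l
      haveI : Invertible ξ' := ξ'.invertibleOfIsUnitDet hdet.isUnit
      have hBTinv : ξ'⁻¹.BlockTriangular id :=
        Matrix.blockTriangular_inv_of_blockTriangular hBT
      have hinvjj : ξ'⁻¹ j j = (ξ' j j)⁻¹ := by
        have h1 : (ξ' * ξ'⁻¹) j j = 1 := by
          rw [Matrix.mul_nonsing_inv ξ' hdet.isUnit]; simp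
        rw [Matrix.mul_apply] at h1
        have h2 : ∑ l, ξ' j l * ξ'⁻¹ l j = ξ' j j * ξ'⁻¹ j j := by
          apply Finset.sum_eq_single
          · intro l _ hl
            rcases hl.lt_or_gt with hl2 | hl2
            · rw [hBT (show id l < id j from hl2), zero_mul]
            · rw [hBTinv (show id j < id l from hl2), mul_zero]
          · intro hmem; exact absurd (Finset.mem_univ j) hmem
        rw [h2] at h1
        exact mul_left_cancel₀ (hdiagne j) (h1.trans (mul_inv_cancel₀ (hdiagne j)).symm)
      obtain ⟨c, hc⟩ := h (Pi.single j (1:O)) i j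
      have key : ((ξ' * Matrix.diagonal (fun l => f ((Pi.single j 1 : Fin n → O) l)) * ξ'⁻¹)) i j
          = f (ξ i j) * (f (ϖ ^ m j))⁻¹ := by
        rw [Matrix.mul_apply]
        have : ∀ l, (ξ' * Matrix.diagonal (fun l => f ((Pi.single j 1 : Fin n → O) l))) i l
            = ξ' i l * f ((Pi.single j 1 : Fin n → O) l) := fun l => Matrix.mul_diagonal _ _ _ _
        simp_rw [this]
        rw [Finset.sum_eq_single j]
        · rw [hinvjj, hdiag' j]
          simp [hξ', Matrix.map_apply]
        · intro l _ hl
          rw [Pi.single_eq_of_ne hl 1, map_zero, mul_zero, zero_mul]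
        · intro hmem; exact absurd (Finset.mem_univ j) hmem
      rw [key] at hc
      refine ⟨c, ?_⟩
      apply hinj
      rw [map_mul]
      have := hfpow j
      field_simp at hc
      rw [← hc, map_pow]
      have hne : (f ϖ) ^ m j ≠ 0 := pow_ne_zero _ ((map_ne_zero_iff f hinj).mpr hϖ0)
      field_simp
    · exact hupper i j hlt
  · -- backward direction
    intro h D i j
    have hξeq : ξ = Matrix.diagonal (fun i => ϖ ^ m i) := by
      ext a b
      by_cases hab : a = b
      · subst hab; simp [hdiag a]
      · rw [h a b hab, Matrix.diagonal_apply_ne _ hab]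
    have hξ'eq : ξ' = Matrix.diagonal (fun i => f (ϖ ^ m i)) := by
      rw [hξ', hξeq, Matrix.diagonal_map (map_zero f)]
    have hinv : (Matrix.diagonal (fun i => f (ϖ ^ m i)))⁻¹
        = Matrix.diagonal (fun i => (f (ϖ ^ m i))⁻¹) := by
      apply Matrix.inv_eq_right_inv
      rw [Matrix.diagonal_mul_diagonal]
      convert Matrix.diagonal_one
      exact mul_inv_cancel₀ (hfpow _)
    rw [hξ'eq, hinv, Matrix.diagonal_mul_diagonal, Matrix.diagonal_mul_diagonal]
    by_cases hij : i = j
    · subst hij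
      refine ⟨D i, ?_⟩
      rw [Matrix.diagonal_apply_eq]
      rw [mul_comm (f (ϖ ^ m i)) (f (D i)), mul_assoc, mul_inv_cancel₀ (hfpow i), mul_one]
    · exact ⟨0, by rw [map_zero, Matrix.diagonal_apply_ne _ hij]⟩
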